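/- Let E : ℤ² → ℝ² be a discrete edge field on a periodic N×N staggered grid, and suppose both the discrete curl vanishes at every plaquette, (∇_h×E)_{i+1/2,j+1/2} = (E_{i+1,j+1/2} - E_{i,j+1/2})/Δx - (E_{i+1/2,j+1} - E_{i+1/2,j})/Δy = 0, and the discrete averages of each component vanish. Then for any other field E' in the same constraint set S_{ρ,h} (i.e., ∇_h·(εE') = ∇_h·(εE)), the difference D = E' - E satisfies ∇_h·(εD) = 0, and F^h[E'] = F^h[E] + F^h[D] ≥ F^h[E], where F^h is the ε-weighted discrete energy. -/

import Mathlib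

/-- Discrete divergence of `εE` at node `(m,n)` on a periodic staggered grid:
`Ex m n = E_{m+1/2,n}`, `Ey m n = E_{m,n+1/2}`. -/
noncomputable def ddiv {N : ℕ} (Δx Δy : ℝ) (εx εy Ex Ey : ZMod N → ZMod N → ℝ) (m n : ZMod N) : ℝ :=
  (εx m n * Ex m n - εx (m - 1) n * Ex (m - 1) n) / Δx +
    (εy m n * Ey m n - εy m (n - 1) * Ey m (n - 1)) / Δy

/-- Discrete ε-weighted electrostatic energy. -/
noncomputable def discreteEnergy (N : ℕ) [NeZero N] (Δx Δy : ℝ)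
    (εx εy Ex Ey : ZMod N → ZMod N → ℝ) : ℝ :=
  Δx * Δy / 2 * ∑ i : ZMod N, ∑ j : ZMod N,
    (εy i j * Ey i j ^ 2 + εx i j * Ex i j ^ 2)

lemma aux_sum_univ_zmod {N : ℕ} [NeZero N] (f : ZMod N → ℝ) :
    ∑ j : ZMod N, f j = ∑ k ∈ Finset.range N, f ↑k := by
  refine Finset.sum_nbij' (fun j => j.val) (fun k => (↑k : ZMod N)) ?_ ?_ ?_ ?_ ?_
  · intro a _; exact Finset.mem_range.2 (ZMod.val_lt a)
  · intro a _; exact Finset.mem_univ _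
  · intro a _; exact ZMod.natCast_rightInverse a
  · intro a ha; exact ZMod.val_cast_of_lt (Finset.mem_range.1 ha)
  · intro a _; rw [ZMod.natCast_rightInverse a]

lemma aux_val_add_one {N : ℕ} [NeZero N] (a : ZMod N) :
    (a + 1).val = (a.val + 1) % N := by
  rw [ZMod.val_add, ZMod.val_one_eq_one_mod]
  conv_rhs => rw [Nat.add_mod]
  simp [Nat.mod_mod_of_dvd, Nat.mod_mod]

lemma aux_shift {N : ℕ} [NeZero N] (f : ZMod N → ℝ) :
    ∑ i : ZMod N, f (i + 1) = ∑ i : ZMod N, f i :=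
  Fintype.sum_equiv (Equiv.addRight (1 : ZMod N)) _ _ (fun _ => rfl)

lemma aux_const {N : ℕ} [NeZero N] (s : ZMod N → ℝ) (h : ∀ i, s (i + 1) = s i)
    (hsum : ∑ i : ZMod N, s i = 0) : ∀ i, s i = 0 := by
  have hc : ∀ k : ℕ, s ↑k = s 0 := by
    intro k
    induction k with
    | zero => simp
    | succ k ih => rw [Nat.cast_succ, h, ih]
  have h0 : ∀ i, s i = s 0 := fun i => by rw [← ZMod.natCast_rightInverse i, hc]
  have hN : (N : ℝ) * s 0 = 0 := by
    rw [← hsum, Finset.sum_congr rfl (fun i _ => h0 i)]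
    simp [Finset.card_univ, mul_comm]
  intro i
  rw [h0 i]
  have : (N : ℝ) ≠ 0 := Nat.cast_ne_zero.2 (NeZero.ne N)
  exact (mul_eq_zero.1 hN).resolve_left this

/-- sum over range of (m+1).val minus sum over range of m.val equals g m,
assuming total sum of g vanishes. -/
lemma aux_step {N : ℕ} [NeZero N] (g : ZMod N → ℝ) (hg : ∑ i : ZMod N, g i = 0)
    (m : ZMod N) :
    ∑ k ∈ Finset.range (m + 1).val, g ↑k - ∑ k ∈ Finset.range m.val, g ↑k = g m := by
  have hv := aux_val_add_one m
  have hlt := ZMod.val_lt m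
  by_cases h : m.val + 1 = N
  · have h0 : (m + 1).val = 0 := by rw [hv, h, Nat.mod_self]
    have hfull : ∑ k ∈ Finset.range N, g ↑k = 0 := by rw [← aux_sum_univ_zmod]; exact hg
    have : ∑ k ∈ Finset.range (m.val + 1), g ↑k = 0 := by rw [h]; exact hfull
    rw [Finset.sum_range_succ, ZMod.natCast_rightInverse m] at this
    rw [h0]
    simp
    linarith
  · have h1 : (m + 1).val = m.val + 1 := by
      rw [hv, Nat.mod_eq_of_lt (by omega)]
    rw [h1, Finset.sum_range_succ, ZMod.natCast_rightInverse m]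
    ring

noncomputable def pot {N : ℕ} [NeZero N] (Δx Δy : ℝ) (Ex Ey : ZMod N → ZMod N → ℝ)
    (m n : ZMod N) : ℝ :=
  Δx * ∑ k ∈ Finset.range m.val, Ex ↑k 0 + Δy * ∑ l ∈ Finset.range n.val, Ey m ↑l

section grad
variable {N : ℕ} [NeZero N] (Δx Δy : ℝ) (Ex Ey : ZMod N → ZMod N → ℝ)

lemma pot_grad_y (hcol : ∀ m, ∑ l : ZMod N, Ey m l = 0) (m n : ZMod N) :
    pot Δx Δy Ex Ey m (n + 1) - pot Δx Δy Ex Ey m n = Δy * Ey m n := by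
  unfold pot
  linear_combination Δy * aux_step (Ey m) (hcol m) n

lemma pot_grad_x (hΔx : Δx ≠ 0) (hΔy : Δy ≠ 0)
    (hcurl : ∀ i j : ZMod N,
      (Ey (i + 1) j - Ey i j) / Δx - (Ex i (j + 1) - Ex i j) / Δy = 0)
    (hrow0 : ∑ i : ZMod N, Ex i 0 = 0) (m n : ZMod N) :
    pot Δx Δy Ex Ey (m + 1) n - pot Δx Δy Ex Ey m n = Δx * Ex m n := by
  unfold pot
  have h1 : Δx * (∑ k ∈ Finset.range (m + 1).val, Ex ↑k 0)
      - Δx * ∑ k ∈ Finset.range m.val, Ex ↑k 0 = Δx * Ex m 0 := by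
    linear_combination Δx * aux_step (fun i => Ex i 0) hrow0 m
  have h2 : Δy * (∑ l ∈ Finset.range n.val, Ey (m + 1) ↑l)
      - Δy * ∑ l ∈ Finset.range n.val, Ey m ↑l = Δx * (Ex m n - Ex m 0) := by
    have hc : ∀ l : ZMod N, Δy * (Ey (m + 1) l - Ey m l) = Δx * (Ex m (l + 1) - Ex m l) := by
      intro l
      have := hcurl m l
      field_simp at this
      linarith
    have ht : ∑ l ∈ Finset.range n.val, (Δx * (Ex m (↑l + 1) - Ex m ↑l))
        = Δx * (Ex m ↑n.val - Ex m 0) := by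
      rw [← Finset.mul_sum]
      congr 1
      have : ∀ l ∈ Finset.range n.val, Ex m (↑l + 1) - Ex m ↑l
          = Ex m ↑(l + 1) - Ex m ↑l := by
        intro l _; push_cast; ring_nf
      rw [Finset.sum_congr rfl this, Finset.sum_range_sub (fun l => Ex m ↑l)]
      simp
    calc Δy * (∑ l ∈ Finset.range n.val, Ey (m + 1) ↑l)
        - Δy * ∑ l ∈ Finset.range n.val, Ey m ↑l
        = ∑ l ∈ Finset.range n.val, Δy * (Ey (m + 1) ↑l - Ey m ↑l) := by
          rw [← mul_sub, ← Finset.sum_sub_distrib, Finset.mul_sum]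
      _ = ∑ l ∈ Finset.range n.val, Δx * (Ex m (↑l + 1) - Ex m ↑l) := by
          exact Finset.sum_congr rfl (fun l _ => hc ↑l)
      _ = Δx * (Ex m ↑n.val - Ex m 0) := ht
      _ = Δx * (Ex m n - Ex m 0) := by rw [ZMod.natCast_rightInverse n]
  linarith

end grad

lemma aux_dsum_add {N : ℕ} [NeZero N] (f g : ZMod N → ZMod N → ℝ) :
    (∑ i : ZMod N, ∑ j : ZMod N, f i j) + (∑ i : ZMod N, ∑ j : ZMod N, g i j)
      = ∑ i : ZMod N, ∑ j : ZMod N, (f i j + g i j) := by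
  rw [← Finset.sum_add_distrib]
  exact Finset.sum_congr rfl fun i _ => (Finset.sum_add_distrib).symm

lemma aux_dsum_sub {N : ℕ} [NeZero N] (f g : ZMod N → ZMod N → ℝ) :
    (∑ i : ZMod N, ∑ j : ZMod N, f i j) - (∑ i : ZMod N, ∑ j : ZMod N, g i j)
      = ∑ i : ZMod N, ∑ j : ZMod N, (f i j - g i j) := by
  rw [← Finset.sum_sub_distrib]
  exact Finset.sum_congr rfl fun i _ => (Finset.sum_sub_distrib _ _).symm

theorem stmt18 {N : ℕ} [NeZero N] (Δx Δy : ℝ) (hΔx : 0 < Δx) (hΔy : 0 < Δy)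
    (εx εy : ZMod N → ZMod N → ℝ)
    (hεx : ∀ a b, 0 < εx a b) (hεy : ∀ a b, 0 < εy a b)
    (Ex Ey Ex' Ey' : ZMod N → ZMod N → ℝ)
    (hcurl : ∀ i j : ZMod N,
      (Ey (i + 1) j - Ey i j) / Δx - (Ex i (j + 1) - Ex i j) / Δy = 0)
    (hmeanx : ∑ i : ZMod N, ∑ j : ZMod N, Ex i j = 0)
    (hmeany : ∑ i : ZMod N, ∑ j : ZMod N, Ey i j = 0)
    (hdiv : ∀ m n : ZMod N,
      ddiv Δx Δy εx εy Ex' Ey' m n = ddiv Δx Δy εx εy Ex Ey m n) :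
    (∀ m n : ZMod N,
        ddiv Δx Δy εx εy (fun a b => Ex' a b - Ex a b) (fun a b => Ey' a b - Ey a b) m n = 0) ∧
      discreteEnergy N Δx Δy εx εy Ex' Ey' =
        discreteEnergy N Δx Δy εx εy Ex Ey +
          discreteEnergy N Δx Δy εx εy (fun a b => Ex' a b - Ex a b)
            (fun a b => Ey' a b - Ey a b) ∧
      discreteEnergy N Δx Δy εx εy Ex Ey ≤ discreteEnergy N Δx Δy εx εy Ex' Ey' := by
  have hΔx' : Δx ≠ 0 := ne_of_gt hΔx
  have hΔy' : Δy ≠ 0 := ne_of_gt hΔy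
  -- Part 1 : divergence of the difference vanishes
  have hdivD : ∀ m n : ZMod N,
      ddiv Δx Δy εx εy (fun a b => Ex' a b - Ex a b) (fun a b => Ey' a b - Ey a b) m n = 0 := by
    intro m n
    have h := hdiv m n
    simp only [ddiv] at h ⊢
    linear_combination h
  -- column sums of Ey vanish
  have hcol : ∀ i, ∑ j : ZMod N, Ey i j = 0 := by
    refine aux_const _ (fun i => ?_) hmeany
    have h1 : ∑ j : ZMod N, Ex i (j + 1) = ∑ j : ZMod N, Ex i j := aux_shift _
    have h2 : ∑ j : ZMod N, (Ey (i + 1) j - Ey i j)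
        = ∑ j : ZMod N, (Δx / Δy) * (Ex i (j + 1) - Ex i j) := by
      refine Finset.sum_congr rfl (fun j _ => ?_)
      have := hcurl i j
      field_simp at this ⊢
      linarith
    rw [Finset.sum_sub_distrib, ← Finset.mul_sum, Finset.sum_sub_distrib, h1, sub_self,
      mul_zero, sub_eq_zero] at h2
    exact h2
  -- row sums of Ex vanish
  have hrow : ∀ j, ∑ i : ZMod N, Ex i j = 0 := by
    refine aux_const _ (fun j => ?_) (by rw [Finset.sum_comm]; exact hmeanx)
    have h1 : ∑ i : ZMod N, Ey (i + 1) j = ∑ i : ZMod N, Ey i j := aux_shift (fun i => Ey i j)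
    have h2 : ∑ i : ZMod N, (Ex i (j + 1) - Ex i j)
        = ∑ i : ZMod N, (Δy / Δx) * (Ey (i + 1) j - Ey i j) := by
      refine Finset.sum_congr rfl (fun i _ => ?_)
      have := hcurl i j
      field_simp at this ⊢
      linarith
    rw [Finset.sum_sub_distrib, ← Finset.mul_sum, Finset.sum_sub_distrib, h1, sub_self,
      mul_zero, sub_eq_zero] at h2
    exact h2
  -- the potential
  set φ := pot Δx Δy Ex Ey with hφdef
  have hgx : ∀ m n, φ (m + 1) n - φ m n = Δx * Ex m n :=
    pot_grad_x Δx Δy Ex Ey hΔx' hΔy' hcurl (hrow 0)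
  have hgy : ∀ m n, φ m (n + 1) - φ m n = Δy * Ey m n :=
    pot_grad_y Δx Δy Ex Ey hcol
  -- abbreviations for the weighted difference field
  set A : ZMod N → ZMod N → ℝ := fun i j => εx i j * (Ex' i j - Ex i j) with hA
  set B : ZMod N → ZMod N → ℝ := fun i j => εy i j * (Ey' i j - Ey i j) with hB
  have hdivD' : ∀ i j : ZMod N,
      (A i j - A (i - 1) j) / Δx + (B i j - B i (j - 1)) / Δy = 0 := by
    intro i j
    have := hdivD i j
    simp only [ddiv] at this
    simpa [hA, hB] using this
  -- the cross term vanishes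
  have cross : ∑ i : ZMod N, ∑ j : ZMod N,
      (εy i j * (Ey' i j - Ey i j) * Ey i j + εx i j * (Ex' i j - Ex i j) * Ex i j) = 0 := by
    have hterm : ∀ i j : ZMod N,
        εy i j * (Ey' i j - Ey i j) * Ey i j + εx i j * (Ex' i j - Ex i j) * Ex i j
          = (B i j * φ i (j + 1) / Δy + A i j * φ (i + 1) j / Δx)
            - (B i j * φ i j / Δy + A i j * φ i j / Δx) := by
      intro i j
      have h1 := hgx i j
      have h2 := hgy i j
      simp only [hA, hB]
      field_simp
      linear_combination (-(εy i j * (Ey' i j - Ey i j) * Δx)) * h2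
        - (εx i j * (Ex' i j - Ex i j) * Δy) * h1
    have e1 : ∑ i : ZMod N, ∑ j : ZMod N, A i j * φ (i + 1) j / Δx
        = ∑ i : ZMod N, ∑ j : ZMod N, A (i - 1) j * φ i j / Δx := by
      refine Fintype.sum_equiv (Equiv.addRight (1 : ZMod N)) _ _ (fun i => ?_)
      simp
    have e2 : ∑ i : ZMod N, ∑ j : ZMod N, B i j * φ i (j + 1) / Δy
        = ∑ i : ZMod N, ∑ j : ZMod N, B i (j - 1) * φ i j / Δy := by
      refine Finset.sum_congr rfl (fun i _ => ?_)
      refine Fintype.sum_equiv (Equiv.addRight (1 : ZMod N)) _ _ (fun j => ?_)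
      simp
    calc ∑ i : ZMod N, ∑ j : ZMod N,
          (εy i j * (Ey' i j - Ey i j) * Ey i j + εx i j * (Ex' i j - Ex i j) * Ex i j)
        = ∑ i : ZMod N, ∑ j : ZMod N,
            ((B i j * φ i (j + 1) / Δy + A i j * φ (i + 1) j / Δx)
              - (B i j * φ i j / Δy + A i j * φ i j / Δx)) :=
          Finset.sum_congr rfl fun i _ => Finset.sum_congr rfl fun j _ => hterm i j
      _ = ((∑ i : ZMod N, ∑ j : ZMod N, B i j * φ i (j + 1) / Δy)
            + ∑ i : ZMod N, ∑ j : ZMod N, A i j * φ (i + 1) j / Δx)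
          - ∑ i : ZMod N, ∑ j : ZMod N, (B i j * φ i j / Δy + A i j * φ i j / Δx) := by
          rw [aux_dsum_add, aux_dsum_sub]
      _ = ∑ i : ZMod N, ∑ j : ZMod N,
            ((B i (j - 1) * φ i j / Δy + A (i - 1) j * φ i j / Δx)
              - (B i j * φ i j / Δy + A i j * φ i j / Δx)) := by
          rw [e1, e2, aux_dsum_add, aux_dsum_sub]
      _ = 0 := by
          refine Finset.sum_eq_zero fun i _ => Finset.sum_eq_zero fun j _ => ?_
          linear_combination (-(φ i j)) * hdivD' i j
  -- energy decomposition
  have hsum2 : ∑ i : ZMod N, ∑ j : ZMod N, (εy i j * Ey' i j ^ 2 + εx i j * Ex' i j ^ 2)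
      = (∑ i : ZMod N, ∑ j : ZMod N, (εy i j * Ey i j ^ 2 + εx i j * Ex i j ^ 2))
        + (∑ i : ZMod N, ∑ j : ZMod N,
            (εy i j * (Ey' i j - Ey i j) ^ 2 + εx i j * (Ex' i j - Ex i j) ^ 2))
        + 2 * ∑ i : ZMod N, ∑ j : ZMod N,
            (εy i j * (Ey' i j - Ey i j) * Ey i j + εx i j * (Ex' i j - Ex i j) * Ex i j) := by
    rw [Finset.mul_sum]
    conv_rhs => rw [aux_dsum_add]
    simp only [Finset.mul_sum]
    rw [aux_dsum_add]
    refine Finset.sum_congr rfl fun i _ => Finset.sum_congr rfl fun j _ => by ring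
  have henergy : discreteEnergy N Δx Δy εx εy Ex' Ey' =
      discreteEnergy N Δx Δy εx εy Ex Ey +
        discreteEnergy N Δx Δy εx εy (fun a b => Ex' a b - Ex a b)
          (fun a b => Ey' a b - Ey a b) := by
    unfold discreteEnergy
    linear_combination (Δx * Δy / 2) * hsum2 + (Δx * Δy) * cross
  refine ⟨hdivD, henergy, ?_⟩
  have hDnonneg : 0 ≤ discreteEnergy N Δx Δy εx εy (fun a b => Ex' a b - Ex a b)
      (fun a b => Ey' a b - Ey a b) := by
    unfold discreteEnergy
    apply mul_nonneg (by positivity)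
    refine Finset.sum_nonneg fun i _ => Finset.sum_nonneg fun j _ => ?_
    have h1 := (hεx i j).le
    have h2 := (hεy i j).le
    positivity
  linarith
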